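/- Suppose ≤ is a total order on Λ and Γ ⊆ Φ is closed. Then the commutator subgroup of the pattern subgroup M(Γ) equals M([Γ,Γ]), where [Γ,Γ] is the set of (α,β) ∈ Φ such that there is a chain (γ₁,γ₂),…,(γ_{n-1},γ_n) ∈ Γ with n ≥ 3, γ₁ = α and γ_n = β. -/

import Mathlib

set_option maxHeartbeats 1000000
set_option synthInstance.maxHeartbeats 1000000
set_option linter.unusedSectionVars false

namespace McLain

open scoped commutatorElement

/-- The endomorphism ring of the free right `R`-module on `Λ`. -/
abbrev E (R : Type*) [Ring R] (Λ : Type*) := Module.End Rᵐᵒᵖ (Λ →₀ R)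

/-- Left multiplication by `r`, as an endomorphism of the right `R`-module `R`. -/
def lmul {R : Type*} [Ring R] (r : R) : R →ₗ[Rᵐᵒᵖ] R where
  toFun s := r * s
  map_add' := fun a b => mul_add r a b
  map_smul' := fun m s => by
    simp [MulOpposite.smul_eq_mul_unop, mul_assoc]

/-- The endomorphism corresponding to `r e_{αβ}`. -/
noncomputable def elt {R : Type*} [Ring R] {Λ : Type*} (α β : Λ) (r : R) : E R Λ :=
  (Finsupp.lsingle α).comp ((lmul r).comp (Finsupp.lapply β))

/-- The unit `1 + r e_{αβ}` of `E`, for `α < β` (its inverse is `1 - r e_{αβ}`). -/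
noncomputable def rootUnit {R : Type*} [Ring R] {Λ : Type*} [PartialOrder Λ]
    {α β : Λ} (h : α < β) (r : R) : (E R Λ)ˣ where
  val := 1 + elt α β r
  inv := 1 + elt α β (-r)
  val_inv := by
    apply LinearMap.ext; intro x
    simp [elt, lmul, Module.End.mul_apply, Finsupp.single_apply, h.ne, mul_add, add_assoc]
  inv_val := by
    apply LinearMap.ext; intro x
    simp [elt, lmul, Module.End.mul_apply, Finsupp.single_apply, h.ne, mul_add, add_assoc]

/-- The pattern subgroup `M(Γ) = ⟨M_{αβ} : (α,β) ∈ Γ⟩`. -/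
noncomputable def patternSubgroup (R : Type*) [Ring R] (Λ : Type*) [PartialOrder Λ]
    (Γ : Set (Λ × Λ)) : Subgroup (E R Λ)ˣ :=
  Subgroup.closure {u | ∃ (α β : Λ) (h : α < β), (α, β) ∈ Γ ∧ ∃ r : R, u = rootUnit h r}


/-- A subset `Γ ⊆ Φ` is closed if `(α,β),(β,γ) ∈ Γ` implies `(α,γ) ∈ Γ`. -/
def IsClosedSubset {Λ : Type*} [PartialOrder Λ] (Γ : Set (Λ × Λ)) : Prop :=
  ∀ α β γ : Λ, (α, β) ∈ Γ → (β, γ) ∈ Γ → (α, γ) ∈ Γ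

/-- `[Γ,Γ]`: the set of `(α,β)` joined by a chain of at least two links of `Γ`,
i.e. there are `γ₁,…,γ_n` with `n ≥ 3`, `γ₁ = α`, `γ_n = β` and each
`(γ_i, γ_{i+1}) ∈ Γ`. -/
def chainSet {Λ : Type*} (Γ : Set (Λ × Λ)) : Set (Λ × Λ) :=
  {p | ∃ (n : ℕ) (c : Fin (n + 3) → Λ), c 0 = p.1 ∧ c (Fin.last (n + 2)) = p.2 ∧
    ∀ i : Fin (n + 2), (c i.castSucc, c i.succ) ∈ Γ}

section Aux

variable {R : Type*} [Ring R] {Λ : Type*} [LinearOrder Λ]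

lemma elt_mul_elt (α β γ δ : Λ) (r s : R) :
    (elt α β r : E R Λ) * elt γ δ s = if γ = β then elt α δ (r * s) else 0 := by
  split_ifs with h
  · subst h
    apply LinearMap.ext; intro x
    simp [elt, lmul, Module.End.mul_apply, Finsupp.single_apply, mul_assoc]
  · apply LinearMap.ext; intro x
    simp [elt, lmul, Module.End.mul_apply, Finsupp.single_apply, Ne.symm h, h]

lemma elt_neg (α β : Λ) (r : R) : (elt α β (-r) : E R Λ) = - elt α β r := by
  apply LinearMap.ext; intro x; simp [elt, lmul]

lemma E_mul_neg (a b : E R Λ) : a * -b = -(a * b) := LinearMap.ext fun x => by simp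
lemma E_neg_mul (a b : E R Λ) : -a * b = -(a * b) := LinearMap.ext fun x => by simp
lemma E_neg_neg (a : E R Λ) : - -a = a := neg_neg a
lemma E_neg_zero : -(0 : E R Λ) = 0 := LinearMap.ext fun x => by simp

lemma rootUnit_val {α β : Λ} (h : α < β) (r : R) :
    (rootUnit h r : (E R Λ)ˣ).val = 1 + elt α β r := rfl

lemma rootUnit_inv_eq {α β : Λ} (h : α < β) (r : R) :
    (rootUnit h r : (E R Λ)ˣ)⁻¹ = rootUnit h (-r) := by
  ext; rfl

lemma commutator_rootUnit_chain {α β δ : Λ} (h1 : α < β) (h2 : β < δ) (r s : R) :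
    ⁅(rootUnit h1 r : (E R Λ)ˣ), rootUnit h2 s⁆ = rootUnit (h1.trans h2) (r * s) := by
  ext
  rw [commutatorElement_def, rootUnit_inv_eq, rootUnit_inv_eq]
  push_cast [rootUnit_val]
  simp only [elt_neg, mul_add, add_mul, one_mul, mul_one, E_mul_neg, E_neg_mul, E_neg_neg,
    E_neg_zero, elt_mul_elt, h1.ne, h1.ne', h2.ne, h2.ne', (h1.trans h2).ne, (h1.trans h2).ne',
    if_true, if_false, eq_self_iff_true, mul_zero, zero_mul, add_zero, zero_add]
  abel

lemma commutator_rootUnit_rev {α β γ : Λ} (h1 : α < β) (h2 : γ < α) (r s : R) :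
    ⁅(rootUnit h1 r : (E R Λ)ˣ), rootUnit h2 s⁆ = rootUnit (h2.trans h1) (-(s * r)) := by
  ext
  rw [commutatorElement_def, rootUnit_inv_eq, rootUnit_inv_eq]
  push_cast [rootUnit_val]
  simp only [elt_neg, mul_add, add_mul, one_mul, mul_one, E_mul_neg, E_neg_mul, E_neg_neg,
    E_neg_zero, elt_mul_elt, h1.ne, h1.ne', h2.ne, h2.ne', (h2.trans h1).ne, (h2.trans h1).ne',
    if_true, if_false, eq_self_iff_true, mul_zero, zero_mul, add_zero, zero_add]
  abel

lemma commutator_rootUnit_disj {α β γ δ : Λ} (h1 : α < β) (h2 : γ < δ)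
    (hβγ : β ≠ γ) (hδα : δ ≠ α) (r s : R) :
    ⁅(rootUnit h1 r : (E R Λ)ˣ), rootUnit h2 s⁆ = 1 := by
  rw [commutatorElement_eq_one_iff_mul_comm]
  ext
  push_cast [rootUnit_val]
  simp only [mul_add, add_mul, one_mul, mul_one, elt_mul_elt, hβγ.symm, hδα.symm,
    if_false, mul_zero, zero_mul, add_zero, zero_add]
  abel

end Aux

section Chain

variable {Λ : Type*} [LinearOrder Λ] {Γ : Set (Λ × Λ)}

lemma chain_comp (hΓ : IsClosedSubset Γ) :
    ∀ (n : ℕ) (c : Fin (n + 2) → Λ),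
      (∀ i : Fin (n + 1), (c i.castSucc, c i.succ) ∈ Γ) →
      (c 0, c (Fin.last (n + 1))) ∈ Γ := by
  intro n
  induction n with
  | zero =>
    intro c hc
    simpa using hc 0
  | succ n ih =>
    intro c hc
    have h1 : (c 0, c ((Fin.last (n + 1)).castSucc)) ∈ Γ := by
      have := ih (fun i => c i.castSucc) (fun i => by
        simpa only [Fin.succ_castSucc] using hc i.castSucc)
      simpa using this
    have h2 := hc (Fin.last (n + 1))
    rw [Fin.succ_last] at h2
    exact hΓ _ _ _ h1 h2

lemma mem_chainSet_of {α δ β : Λ} (h1 : (α, δ) ∈ Γ) (h2 : (δ, β) ∈ Γ) :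
    (α, β) ∈ chainSet Γ := by
  refine ⟨0, ![α, δ, β], rfl, rfl, ?_⟩
  intro i
  fin_cases i <;> simpa

lemma chainSet_two_step (hΓ : IsClosedSubset Γ) {p : Λ × Λ} (hp : p ∈ chainSet Γ) :
    ∃ δ, (p.1, δ) ∈ Γ ∧ (δ, p.2) ∈ Γ := by
  obtain ⟨n, c, h0, hl, hc⟩ := hp
  refine ⟨c 1, ?_, ?_⟩
  · have := hc 0
    simpa [h0] using this
  · have := chain_comp hΓ n (fun i => c i.succ) (fun i => by
      simpa only [Fin.succ_castSucc] using hc i.succ)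
    simpa [Fin.succ_last, hl] using this

lemma chainSet_subset (hΓ : IsClosedSubset Γ) : chainSet Γ ⊆ Γ := by
  intro p hp
  obtain ⟨δ, h1, h2⟩ := chainSet_two_step hΓ hp
  exact hΓ _ _ _ h1 h2

lemma chainSet_left (hΓ : IsClosedSubset Γ) {α γ δ : Λ}
    (h1 : (α, γ) ∈ Γ) (h2 : (γ, δ) ∈ chainSet Γ) : (α, δ) ∈ chainSet Γ := by
  obtain ⟨ε, ha, hb⟩ := chainSet_two_step hΓ h2
  exact mem_chainSet_of (hΓ _ _ _ h1 ha) hb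

lemma chainSet_right (hΓ : IsClosedSubset Γ) {γ δ β : Λ}
    (h1 : (γ, δ) ∈ chainSet Γ) (h2 : (δ, β) ∈ Γ) : (γ, β) ∈ chainSet Γ := by
  obtain ⟨ε, ha, hb⟩ := chainSet_two_step hΓ h1
  exact mem_chainSet_of ha (hΓ _ _ _ hb h2)

end Chain

/-- For `≤` total and `Γ ⊆ Φ` closed, the commutator subgroup of the
pattern subgroup `M(Γ)` equals `M([Γ,Γ])`. -/
theorem commutator_patternSubgroup (R : Type*) [Ring R] [Nontrivial R]
    (Λ : Type*) [LinearOrder Λ] (Γ : Set (Λ × Λ))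
    (hΦ : Γ ⊆ {p : Λ × Λ | p.1 < p.2}) (hΓ : IsClosedSubset Γ) :
    ⁅patternSubgroup R Λ Γ, patternSubgroup R Λ Γ⁆ =
      patternSubgroup R Λ (chainSet Γ) := by
  classical
  set SΓ : Set (E R Λ)ˣ :=
    {u | ∃ (α β : Λ) (h : α < β), (α, β) ∈ Γ ∧ ∃ r : R, u = rootUnit h r} with hSΓ
  set SN : Set (E R Λ)ˣ :=
    {u | ∃ (α β : Λ) (h : α < β), (α, β) ∈ chainSet Γ ∧ ∃ r : R, u = rootUnit h r} with hSN
  have hH : patternSubgroup R Λ Γ = Subgroup.closure SΓ := rfl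
  have hN : patternSubgroup R Λ (chainSet Γ) = Subgroup.closure SN := rfl
  set H := patternSubgroup R Λ Γ
  set N := patternSubgroup R Λ (chainSet Γ)
  -- inverses of generators are generators
  have hSΓ_inv : ∀ u ∈ SΓ, u⁻¹ ∈ SΓ := by
    rintro u ⟨α, β, h, hm, r, rfl⟩
    exact ⟨α, β, h, hm, -r, rootUnit_inv_eq h r⟩
  -- generator commutator computations
  have gen_comm : ∀ {α β γ δ : Λ} (h1 : α < β) (h2 : γ < δ) (r s : R),
      (α, β) ∈ Γ → (γ, δ) ∈ chainSet Γ →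
      ⁅(rootUnit h1 r : (E R Λ)ˣ), rootUnit h2 s⁆ ∈ N := by
    intro α β γ δ h1 h2 r s hab hgd
    by_cases hβγ : β = γ
    · subst hβγ
      rw [commutator_rootUnit_chain h1 h2]
      exact Subgroup.subset_closure ⟨α, δ, _, chainSet_left hΓ hab hgd, _, rfl⟩
    · by_cases hδα : δ = α
      · subst hδα
        rw [commutator_rootUnit_rev h1 h2]
        exact Subgroup.subset_closure ⟨γ, β, _, chainSet_right hΓ hgd hab, _, rfl⟩
      · rw [commutator_rootUnit_disj h1 h2 hβγ hδα]
        exact one_mem N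
  have gen_comm' : ∀ {α β γ δ : Λ} (h1 : α < β) (h2 : γ < δ) (r s : R),
      (α, β) ∈ Γ → (γ, δ) ∈ Γ →
      ⁅(rootUnit h1 r : (E R Λ)ˣ), rootUnit h2 s⁆ ∈ N := by
    intro α β γ δ h1 h2 r s hab hgd
    by_cases hβγ : β = γ
    · subst hβγ
      rw [commutator_rootUnit_chain h1 h2]
      exact Subgroup.subset_closure ⟨α, δ, _, mem_chainSet_of hab hgd, _, rfl⟩
    · by_cases hδα : δ = α
      · subst hδα
        rw [commutator_rootUnit_rev h1 h2]
        exact Subgroup.subset_closure ⟨γ, β, _, mem_chainSet_of hgd hab, _, rfl⟩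
      · rw [commutator_rootUnit_disj h1 h2 hβγ hδα]
        exact one_mem N
  -- conjugation of N by a generator of H
  have conj_gen : ∀ u ∈ SΓ, ∀ n ∈ N, u * n * u⁻¹ ∈ N := by
    rintro u hu n hn
    rw [hN] at hn
    induction hn using Subgroup.closure_induction with
    | mem v hv =>
      obtain ⟨α, β, h1, hab, r, rfl⟩ := hu
      obtain ⟨γ, δ, h2, hgd, s, rfl⟩ := hv
      have key : (rootUnit h1 r : (E R Λ)ˣ) * rootUnit h2 s * (rootUnit h1 r)⁻¹ =
          ⁅(rootUnit h1 r : (E R Λ)ˣ), rootUnit h2 s⁆ * rootUnit h2 s := by group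
      rw [key]
      exact mul_mem (gen_comm h1 h2 r s hab hgd)
        (Subgroup.subset_closure ⟨γ, δ, h2, hgd, s, rfl⟩)
    | one => simpa using one_mem N
    | mul x y hx hy ihx ihy =>
      have key : u * (x * y) * u⁻¹ = (u * x * u⁻¹) * (u * y * u⁻¹) := by group
      rw [key]; exact mul_mem ihx ihy
    | inv x hx ihx =>
      have key : u * x⁻¹ * u⁻¹ = (u * x * u⁻¹)⁻¹ := by group
      rw [key]; exact inv_mem ihx
  -- N is normalized by all of H
  have conj_mem2 : ∀ g ∈ H, ∀ n ∈ N, g * n * g⁻¹ ∈ N ∧ g⁻¹ * n * g ∈ N := by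
    intro g hg
    rw [hH] at hg
    induction hg using Subgroup.closure_induction with
    | mem u hu =>
      intro n hn
      refine ⟨conj_gen u hu n hn, ?_⟩
      have := conj_gen u⁻¹ (hSΓ_inv u hu) n hn
      rwa [inv_inv] at this
    | one => intro n hn; simpa using hn
    | mul x y hx hy ihx ihy =>
      intro n hn
      constructor
      · have key : x * y * n * (x * y)⁻¹ = x * (y * n * y⁻¹) * x⁻¹ := by group
        rw [key]; exact (ihx _ (ihy _ hn).1).1
      · have key : (x * y)⁻¹ * n * (x * y) = y⁻¹ * (x⁻¹ * n * x) * y := by group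
        rw [key]; exact (ihy _ (ihx _ hn).2).2
    | inv x hx ihx =>
      intro n hn
      refine ⟨(ihx n hn).2, ?_⟩
      rw [inv_inv]
      exact (ihx n hn).1
  have conj_mem : ∀ g ∈ H, ∀ n ∈ N, g * n * g⁻¹ ∈ N := fun g hg n hn =>
    (conj_mem2 g hg n hn).1
  -- all commutators of H lie in N
  have comm_mem : ∀ g ∈ H, ∀ h ∈ H, ⁅g, h⁆ ∈ N := by
    intro g hg
    rw [hH] at hg
    induction hg using Subgroup.closure_induction with
    | mem u hu =>
      intro h hh
      rw [hH] at hh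
      induction hh using Subgroup.closure_induction with
      | mem v hv =>
        obtain ⟨α, β, h1, hab, r, rfl⟩ := hu
        obtain ⟨γ, δ, h2, hgd, s, rfl⟩ := hv
        exact gen_comm' h1 h2 r s hab hgd
      | one => simpa using one_mem N
      | mul x y hx hy ihx ihy =>
        have key : ⁅u, x * y⁆ = ⁅u, x⁆ * (x * ⁅u, y⁆ * x⁻¹) := by
          simp only [commutatorElement_def]; group
        rw [key]
        exact mul_mem ihx (conj_mem x (by rw [hH]; exact hx) _ ihy)
      | inv x hx ihx =>
        have hxH : x ∈ H := by rw [hH]; exact hx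
        have key : ⁅u, x⁻¹⁆ = x⁻¹ * ⁅u, x⁆⁻¹ * (x⁻¹)⁻¹ := by
          simp only [commutatorElement_def]; group
        rw [key]
        exact conj_mem x⁻¹ (inv_mem hxH) _ (inv_mem ihx)
    | one => intro h hh; simpa using one_mem N
    | mul x y hx hy ihx ihy =>
      intro h hh
      have hxH : x ∈ H := by rw [hH]; exact hx
      have key : ⁅x * y, h⁆ = x * ⁅y, h⁆ * x⁻¹ * ⁅x, h⁆ := by
        simp only [commutatorElement_def]; group
      rw [key]
      exact mul_mem (conj_mem x hxH _ (ihy h hh)) (ihx h hh)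
    | inv x hx ihx =>
      intro h hh
      have hxH : x ∈ H := by rw [hH]; exact hx
      have key : ⁅x⁻¹, h⁆ = x⁻¹ * ⁅x, h⁆⁻¹ * (x⁻¹)⁻¹ := by
        simp only [commutatorElement_def]; group
      rw [key]
      exact conj_mem x⁻¹ (inv_mem hxH) _ (inv_mem (ihx h hh))
  apply le_antisymm
  · exact Subgroup.commutator_le.2 comm_mem
  · rw [hN]
    apply (Subgroup.closure_le _).2
    rintro u ⟨α, β, h, hab, r, rfl⟩
    obtain ⟨δ, h1, h2⟩ := chainSet_two_step hΓ hab
    have hαδ : α < δ := hΦ h1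
    have hδβ : δ < β := hΦ h2
    have : (rootUnit h r : (E R Λ)ˣ) = ⁅(rootUnit hαδ r : (E R Λ)ˣ), rootUnit hδβ 1⁆ := by
      rw [commutator_rootUnit_chain hαδ hδβ r 1, mul_one]
    rw [this]
    exact Subgroup.commutator_mem_commutator
      (Subgroup.subset_closure ⟨α, δ, hαδ, h1, r, rfl⟩)
      (Subgroup.subset_closure ⟨δ, β, hδβ, h2, 1, rfl⟩)

end McLain
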